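/- arXiv:2102.02056 — 3 statements merged into one kernel-verified Lean document; each statement's English description precedes it below -/
import Mathlib

section
/- Let h be a descriptive proximal conjugacy between f and g. If A is an eventual descriptively fixed subset of f (i.e., Φ₁(f(A)) ≠ Φ₁(A) but Φ₁(fⁿ(A)) = Φ₁(A) for some n > 1), then h(A) is an eventual descriptively fixed subset of g. -/
theorem descriptive_conjugacy_eventual_fixed_subset
    {X Y : Type*} {m : ℕ}
    (Φ₁ : X → (Fin m → ℝ)) (Φ₂ : Y → (Fin m → ℝ))
    (f : X → X) (g : Y → Y) (h : X → Y)
    (hbij : Function.Bijective h)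
    (hiff : ∀ A B : Set X, Φ₁ '' A = Φ₁ '' B ↔ Φ₂ '' (h '' A) = Φ₂ '' (h '' B))
    (hconj : ∀ A : Set X, Φ₂ '' (g '' (h '' A)) = Φ₂ '' (h '' (f '' A)))
    (hiter : ∀ (A : Set X) (n : ℕ),
      Φ₂ '' (h '' (f^[n] '' A)) = Φ₂ '' (g^[n] '' (h '' A)))
    (A : Set X)
    (hA : Φ₁ '' (f '' A) ≠ Φ₁ '' A ∧ ∃ n : ℕ, 1 < n ∧ Φ₁ '' (f^[n] '' A) = Φ₁ '' A) :
    Φ₂ '' (g '' (h '' A)) ≠ Φ₂ '' (h '' A) ∧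
      ∃ n : ℕ, 1 < n ∧ Φ₂ '' (g^[n] '' (h '' A)) = Φ₂ '' (h '' A) := by
  obtain ⟨hne, n, hn, hfix⟩ := hA
  constructor
  · rw [hconj A]
    intro hc
    exact hne ((hiff (f '' A) A).2 hc)
  · exact ⟨n, hn, by rw [← hiter A n]; exact (hiff _ A).1 hfix⟩
end

section
/- Let h be a descriptive proximal conjugacy between f and g. If A is an almost descriptively fixed subset of f (i.e., either f(A) =_des A or A δ_{Φ₁} f(A)), then h(A) is an almost descriptively fixed subset of g. -/
theorem descriptive_conjugacy_almost_fixed_subset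
    {X Y : Type*} {m : ℕ}
    (Φ₁ : X → (Fin m → ℝ)) (Φ₂ : Y → (Fin m → ℝ))
    (f : X → X) (g : Y → Y) (h : X → Y)
    (hbij : Function.Bijective h)
    (hhpres : ∀ A B : Set X, Φ₁ '' A = Φ₁ '' B → Φ₂ '' (h '' A) = Φ₂ '' (h '' B))
    (hhδ : ∀ A B : Set X, (∃ x ∈ A, ∃ y ∈ B, Φ₁ x = Φ₁ y) →
      ∃ x ∈ h '' A, ∃ y ∈ h '' B, Φ₂ x = Φ₂ y)
    (hconj : ∀ A : Set X, Φ₂ '' (g '' (h '' A)) = Φ₂ '' (h '' (f '' A)))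
    (A : Set X)
    (hA : Φ₁ '' (f '' A) = Φ₁ '' A ∨ ∃ x ∈ A, ∃ y ∈ f '' A, Φ₁ x = Φ₁ y) :
    Φ₂ '' (g '' (h '' A)) = Φ₂ '' (h '' A) ∨
      ∃ x ∈ h '' A, ∃ y ∈ g '' (h '' A), Φ₂ x = Φ₂ y := by
  rcases hA with h1 | h2
  · left
    rw [hconj A]
    exact hhpres _ _ h1
  · right
    obtain ⟨x, hx, y, hy, hxy⟩ := hhδ A (f '' A) h2
    have : Φ₂ y ∈ Φ₂ '' (h '' (f '' A)) := ⟨y, hy, rfl⟩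
    rw [← hconj A] at this
    obtain ⟨y', hy', hyy⟩ := this
    exact ⟨x, hx, y', hy', hxy.trans hyy.symm⟩
end

section
/- Let F be a commuting family of continuous affine self-maps of a nonempty compact convex subset K of ℝⁿ. Then there is a common fixed point: some x ∈ K with f(x) = x for every f ∈ F. -/
open Finset Set Filter Topology

namespace KakutaniMarkovAux

variable {n : ℕ} {K : Set (Fin n → ℝ)}

/-- `g` is affine on `K`. -/
def AffOnK (K : Set (Fin n → ℝ)) (g : (Fin n → ℝ) → (Fin n → ℝ)) : Prop :=
  ∀ x ∈ K, ∀ y ∈ K, ∀ t : ℝ, t ∈ Set.Icc (0:ℝ) 1 →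
    g (t • x + (1 - t) • y) = t • g x + (1 - t) • g y

lemma affOnK_id : AffOnK K id := fun _ _ _ _ _ _ => rfl

lemma affOnK_comp {g h : (Fin n → ℝ) → (Fin n → ℝ)} (hg : AffOnK K g) (hh : AffOnK K h)
    (hhm : Set.MapsTo h K K) : AffOnK K (g ∘ h) := by
  intro x hx y hy t ht
  simp only [Function.comp_apply]
  rw [hh x hx y hy t ht, hg _ (hhm hx) _ (hhm hy) t ht]

/-- Affine-on-K maps respect finite convex combinations of points of `K`. -/
lemma affOnK_sum (hconv : Convex ℝ K) {g : (Fin n → ℝ) → (Fin n → ℝ)}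
    (hgm : Set.MapsTo g K K) (hga : AffOnK K g)
    {ι : Type*} (s : Finset ι) (w : ι → ℝ) (p : ι → (Fin n → ℝ))
    (h0 : ∀ i ∈ s, 0 ≤ w i) (h1 : ∑ i ∈ s, w i = 1) (hp : ∀ i ∈ s, p i ∈ K) :
    g (∑ i ∈ s, w i • p i) = ∑ i ∈ s, w i • g (p i) := by
  induction s using Finset.cons_induction generalizing w with
  | empty => simp at h1
  | cons a s ha ih =>
    rw [Finset.sum_cons] at h1 ⊢
    rw [Finset.sum_cons]
    have ht0 : 0 ≤ w a := h0 a (Finset.mem_cons_self a s)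
    have hsnn : 0 ≤ ∑ i ∈ s, w i :=
      Finset.sum_nonneg fun i hi => h0 i (Finset.mem_cons_of_mem hi)
    have hts : ∑ i ∈ s, w i = 1 - w a := by linarith
    by_cases hc : w a = 1
    · have hz : ∀ i ∈ s, w i = 0 := by
        have : ∑ i ∈ s, w i = 0 := by rw [hts, hc]; ring
        exact (Finset.sum_eq_zero_iff_of_nonneg
          fun i hi => h0 i (Finset.mem_cons_of_mem hi)).mp this
      have e1 : ∑ i ∈ s, w i • p i = 0 := Finset.sum_eq_zero fun i hi => by
        rw [hz i hi, zero_smul]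
      have e2 : ∑ i ∈ s, w i • g (p i) = 0 := Finset.sum_eq_zero fun i hi => by
        rw [hz i hi, zero_smul]
      rw [e1, e2, hc, one_smul, one_smul, add_zero, add_zero]
    · have ht1 : w a < 1 := lt_of_le_of_ne (by linarith) hc
      have h1t : (0:ℝ) < 1 - w a := by linarith
      set z : Fin n → ℝ := ∑ i ∈ s, (w i / (1 - w a)) • p i with hzdef
      have hwnn : ∀ i ∈ s, 0 ≤ w i / (1 - w a) := fun i hi =>
        div_nonneg (h0 i (Finset.mem_cons_of_mem hi)) h1t.le
      have hwsum : ∑ i ∈ s, w i / (1 - w a) = 1 := by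
        rw [← Finset.sum_div, hts, div_self h1t.ne']
      have hpK : ∀ i ∈ s, p i ∈ K := fun i hi => hp i (Finset.mem_cons_of_mem hi)
      have hzK : z ∈ K := hconv.sum_mem hwnn hwsum hpK
      have hrw : ∑ i ∈ s, w i • p i = (1 - w a) • z := by
        rw [hzdef, Finset.smul_sum]
        refine Finset.sum_congr rfl fun i hi => ?_
        rw [smul_smul, mul_div_cancel₀ _ h1t.ne']
      have hrw' : ∑ i ∈ s, w i • g (p i) = (1 - w a) • g z := by
        have := ih (fun i => w i / (1 - w a)) hwnn hwsum hpK
        rw [hzdef, this, Finset.smul_sum]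
        refine Finset.sum_congr rfl fun i hi => ?_
        rw [smul_smul, mul_div_cancel₀ _ h1t.ne']
      rw [hrw, hrw',
        hga _ (hp a (Finset.mem_cons_self a s)) _ hzK (w a) ⟨ht0, ht1.le⟩]

/-- The Cesàro average map. -/
noncomputable def cesaro (f : (Fin n → ℝ) → (Fin n → ℝ)) (N : ℕ) (x : Fin n → ℝ) :
    Fin n → ℝ :=
  (N : ℝ)⁻¹ • ∑ k ∈ Finset.range N, f^[k] x

lemma cesaro_eq_sum (f : (Fin n → ℝ) → (Fin n → ℝ)) (N : ℕ) (x : Fin n → ℝ) :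
    cesaro f N x = ∑ k ∈ Finset.range N, (N:ℝ)⁻¹ • f^[k] x := by
  rw [cesaro, Finset.smul_sum]

lemma sum_inv_N {N : ℕ} (hN : 1 ≤ N) :
    ∑ _k ∈ Finset.range N, (N:ℝ)⁻¹ = 1 := by
  rw [Finset.sum_const, Finset.card_range, nsmul_eq_mul]
  have : (N:ℝ) ≠ 0 := Nat.cast_ne_zero.mpr (Nat.one_le_iff_ne_zero.mp hN)
  field_simp

lemma iter_affOnK {f : (Fin n → ℝ) → (Fin n → ℝ)} (hfm : Set.MapsTo f K K)
    (hfa : AffOnK K f) (k : ℕ) : AffOnK K (f^[k]) := by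
  induction k with
  | zero => simpa using (affOnK_id (K := K))
  | succ k ih =>
    intro x hx y hy t ht
    rw [Function.iterate_succ_apply', Function.iterate_succ_apply',
      Function.iterate_succ_apply', ih x hx y hy t ht,
      hfa _ (hfm.iterate k hx) _ (hfm.iterate k hy) t ht]

lemma cesaro_mapsTo (hconv : Convex ℝ K) {f : (Fin n → ℝ) → (Fin n → ℝ)}
    (hfm : Set.MapsTo f K K) {N : ℕ} (hN : 1 ≤ N) :
    Set.MapsTo (cesaro f N) K K := by
  intro x hx
  rw [cesaro_eq_sum]
  refine hconv.sum_mem (fun i _ => by positivity) (sum_inv_N hN)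
    (fun i _ => hfm.iterate i hx)

lemma cesaro_continuousOn {f : (Fin n → ℝ) → (Fin n → ℝ)} (hfm : Set.MapsTo f K K)
    (hfc : ContinuousOn f K) (N : ℕ) : ContinuousOn (cesaro f N) K := by
  have hiter : ∀ k : ℕ, ContinuousOn (f^[k]) K := by
    intro k
    induction k with
    | zero => simpa using continuousOn_id
    | succ k ih =>
      rw [Function.iterate_succ']
      exact hfc.comp ih (hfm.iterate k)
  have : ContinuousOn (fun x => ∑ k ∈ Finset.range N, f^[k] x) K := by
    apply continuousOn_finset_sum
    intro k _
    exact hiter k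
  exact this.const_smul ((N:ℝ)⁻¹)

lemma cesaro_affOnK {f : (Fin n → ℝ) → (Fin n → ℝ)} (hfm : Set.MapsTo f K K)
    (hfa : AffOnK K f) (N : ℕ) : AffOnK K (cesaro f N) := by
  intro x hx y hy t ht
  rw [cesaro, cesaro, cesaro]
  have : ∑ k ∈ Finset.range N, f^[k] (t • x + (1 - t) • y)
      = t • ∑ k ∈ Finset.range N, f^[k] x + (1 - t) • ∑ k ∈ Finset.range N, f^[k] y := by
    rw [Finset.smul_sum, Finset.smul_sum, ← Finset.sum_add_distrib]
    refine Finset.sum_congr rfl fun k _ => ?_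
    rw [iter_affOnK hfm hfa k x hx y hy t ht]
  rw [this, smul_add, smul_comm ((N:ℝ)⁻¹) t, smul_comm ((N:ℝ)⁻¹) (1-t)]

lemma comm_iterate {g f : (Fin n → ℝ) → (Fin n → ℝ)} (hfm : Set.MapsTo f K K)
    (hc : ∀ x ∈ K, g (f x) = f (g x)) (k : ℕ) :
    ∀ x ∈ K, g (f^[k] x) = f^[k] (g x) := by
  induction k with
  | zero => intro x _; rfl
  | succ k ih =>
    intro x hx
    rw [Function.iterate_succ_apply', Function.iterate_succ_apply',
      hc _ (hfm.iterate k hx), ih x hx]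

/-- A map affine on `K` that commutes with `f` on `K` commutes with the Cesàro averages. -/
lemma comm_cesaro (hconv : Convex ℝ K) {g f : (Fin n → ℝ) → (Fin n → ℝ)}
    (hgm : Set.MapsTo g K K) (hga : AffOnK K g) (hfm : Set.MapsTo f K K)
    (hc : ∀ x ∈ K, g (f x) = f (g x)) {N : ℕ} (hN : 1 ≤ N) :
    ∀ x ∈ K, g (cesaro f N x) = cesaro f N (g x) := by
  intro x hx
  rw [cesaro_eq_sum, cesaro_eq_sum,
    affOnK_sum hconv hgm hga (Finset.range N) (fun _ => (N:ℝ)⁻¹) (fun k => f^[k] x)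
      (fun i _ => by positivity) (sum_inv_N hN) (fun i _ => hfm.iterate i hx)]
  exact Finset.sum_congr rfl fun k _ => by rw [comm_iterate hfm hc k x hx]

end KakutaniMarkovAux

open KakutaniMarkovAux in
theorem kakutani_markov_finite_dim
    {n : ℕ} (K : Set (Fin n → ℝ)) (hne : K.Nonempty) (hK : IsCompact K)
    (hconv : Convex ℝ K) (F : Set ((Fin n → ℝ) → (Fin n → ℝ)))
    (hmaps : ∀ f ∈ F, Set.MapsTo f K K)
    (hcont : ∀ f ∈ F, ContinuousOn f K)
    (haff : ∀ f ∈ F, ∀ x ∈ K, ∀ y ∈ K, ∀ t : ℝ, t ∈ Set.Icc (0:ℝ) 1 →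
      f (t • x + (1 - t) • y) = t • f x + (1 - t) • f y)
    (hcomm : ∀ f ∈ F, ∀ g ∈ F, ∀ x ∈ K, f (g x) = g (f x)) :
    ∃ x ∈ K, ∀ f ∈ F, f x = x := by
  classical
  -- index type: pairs (f, N) with f ∈ F, 1 ≤ N
  let ι := {p : (((Fin n → ℝ) → (Fin n → ℝ)) × ℕ) // p.1 ∈ F ∧ 1 ≤ p.2}
  let S : ι → Set (Fin n → ℝ) := fun p => cesaro p.1.1 p.1.2 '' K
  have haff' : ∀ f ∈ F, AffOnK K f := fun f hf => haff f hf
  -- basic properties of each S p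
  have hScompact : ∀ p : ι, IsCompact (S p) := fun p =>
    hK.image_of_continuousOn (cesaro_continuousOn (hmaps _ p.2.1) (hcont _ p.2.1) _)
  have hSsubK : ∀ p : ι, S p ⊆ K := fun p =>
    (cesaro_mapsTo hconv (hmaps _ p.2.1) p.2.2).image_subset
  -- cesàro averages commute with each other on K
  have hAcomm : ∀ p q : ι, ∀ x ∈ K,
      cesaro p.1.1 p.1.2 (cesaro q.1.1 q.1.2 x) =
      cesaro q.1.1 q.1.2 (cesaro p.1.1 p.1.2 x) := by
    intro p q x hx
    have hcfq : ∀ z ∈ K, cesaro p.1.1 p.1.2 (q.1.1 z) = q.1.1 (cesaro p.1.1 p.1.2 z) := by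
      intro z hz
      exact (comm_cesaro hconv (hmaps _ q.2.1) (haff' _ q.2.1) (hmaps _ p.2.1)
        (fun y hy => hcomm _ q.2.1 _ p.2.1 y hy) p.2.2 z hz).symm
    exact comm_cesaro hconv
      (cesaro_mapsTo hconv (hmaps _ p.2.1) p.2.2)
      (cesaro_affOnK (hmaps _ p.2.1) (haff' _ p.2.1) _)
      (hmaps _ q.2.1) hcfq q.2.2 x hx
  -- finite intersection property
  have hFIP : ∀ u : Finset ι, (K ∩ ⋂ p ∈ u, S p).Nonempty := by
    intro u
    -- build the composed map
    have key : ∃ c : (Fin n → ℝ) → (Fin n → ℝ), Set.MapsTo c K K ∧ AffOnK K c ∧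
        (∀ q : ι, ∀ x ∈ K, cesaro q.1.1 q.1.2 (c x) = c (cesaro q.1.1 q.1.2 x)) ∧
        (∀ p ∈ u, ∀ x ∈ K, c x ∈ S p) := by
      induction u using Finset.induction_on with
      | empty =>
        exact ⟨id, Set.mapsTo_id K, affOnK_id, fun _ _ _ => rfl, fun p hp => by simp at hp⟩
      | insert _ _ hp ih =>
        rename_i p u
        obtain ⟨c, hcm, hca, hcc, hcS⟩ := ih
        refine ⟨cesaro p.1.1 p.1.2 ∘ c,
          (cesaro_mapsTo hconv (hmaps _ p.2.1) p.2.2).comp hcm,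
          affOnK_comp (cesaro_affOnK (hmaps _ p.2.1) (haff' _ p.2.1) _) hca hcm,
          ?_, ?_⟩
        · intro q x hx
          simp only [Function.comp_apply]
          rw [← hcc q x hx, hAcomm q p _ (hcm hx)]
        · intro r hr x hx
          rcases Finset.mem_insert.mp hr with h | h
          · subst h
            exact ⟨c x, hcm hx, rfl⟩
          · have hcx : c x ∈ S r := hcS r h x hx
            obtain ⟨y, hy, hyx⟩ := hcx
            refine ⟨cesaro p.1.1 p.1.2 y, cesaro_mapsTo hconv (hmaps _ p.2.1) p.2.2 hy, ?_⟩
            simp only [Function.comp_apply, ← hyx]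
            exact (hAcomm p r y hy).symm
    obtain ⟨c, hcm, _, _, hcS⟩ := key
    obtain ⟨x₀, hx₀⟩ := hne
    refine ⟨c x₀, hcm hx₀, ?_⟩
    simp only [Set.mem_iInter]
    exact fun p hp => hcS p hp x₀ hx₀
  -- closed sets, compact intersection
  obtain ⟨x, hxK, hxS⟩ := hK.inter_iInter_nonempty S
    (fun p => (hScompact p).isClosed) hFIP
  simp only [Set.mem_iInter] at hxS
  -- bound on K
  obtain ⟨C, hC⟩ := hK.isBounded.exists_norm_le
  refine ⟨x, hxK, ?_⟩
  intro f hf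
  -- for each N ≥ 1, ‖f x - x‖ ≤ 2C/N
  have hbound : ∀ N : ℕ, 1 ≤ N → ‖f x - x‖ ≤ (N:ℝ)⁻¹ * (2 * C) := by
    intro N hN
    obtain ⟨y, hy, hyx⟩ := hxS ⟨(f, N), hf, hN⟩
    have hfx : f x = ∑ k ∈ Finset.range N, (N:ℝ)⁻¹ • f^[k+1] y := by
      rw [← hyx, cesaro_eq_sum,
        affOnK_sum hconv (hmaps f hf) (haff' f hf) (Finset.range N)
          (fun _ => (N:ℝ)⁻¹) (fun k => f^[k] y) (fun i _ => by positivity)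
          (sum_inv_N hN) (fun i _ => (hmaps f hf).iterate i hy)]
      exact Finset.sum_congr rfl fun k _ => by
        rw [← Function.iterate_succ_apply' f k y]
    have hx' : x = ∑ k ∈ Finset.range N, (N:ℝ)⁻¹ • f^[k] y := by
      rw [← hyx, cesaro_eq_sum]
    have heq : f x - x = (N:ℝ)⁻¹ • (f^[N] y - y) := by
      rw [hfx, hx', ← Finset.sum_sub_distrib]
      have : ∀ k ∈ Finset.range N,
          (N:ℝ)⁻¹ • f^[k+1] y - (N:ℝ)⁻¹ • f^[k] y
            = (N:ℝ)⁻¹ • (f^[k+1] y - f^[k] y) := fun k _ => (smul_sub _ _ _).symm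
      rw [Finset.sum_congr rfl this, ← Finset.smul_sum,
        Finset.sum_range_sub (fun k => f^[k] y)]
      simp
    rw [heq, norm_smul]
    have h1 : ‖f^[N] y - y‖ ≤ 2 * C := by
      calc ‖f^[N] y - y‖ ≤ ‖f^[N] y‖ + ‖y‖ := norm_sub_le _ _
        _ ≤ C + C := add_le_add (hC _ ((hmaps f hf).iterate N hy)) (hC _ hy)
        _ = 2 * C := by ring
    have h2 : ‖((N:ℝ)⁻¹ : ℝ)‖ = (N:ℝ)⁻¹ := by
      rw [Real.norm_eq_abs, abs_of_nonneg (by positivity)]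
    rw [h2]
    exact mul_le_mul_of_nonneg_left h1 (by positivity)
  -- conclude
  have hlim : Filter.Tendsto (fun N : ℕ => (N:ℝ)⁻¹ * (2 * C)) Filter.atTop (nhds 0) := by
    have := tendsto_inv_atTop_nhds_zero_nat.mul_const (2 * C)
    simpa using this
  have hle : ‖f x - x‖ ≤ 0 := by
    refine ge_of_tendsto hlim ?_
    filter_upwards [Filter.eventually_ge_atTop 1] with N hN
    exact hbound N hN
  have : f x - x = 0 := by
    have := norm_nonneg (f x - x)
    have : ‖f x - x‖ = 0 := le_antisymm hle this
    exact norm_eq_zero.mp this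
  exact sub_eq_zero.mp this
end
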